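/- Let A be a type and f₁, f₂ : ℕ → A. Let M be a modulus of convergence for f₁ and N a modulus of convergence for f₂. Define (M ⊔ N) h z := N h (M (h ∘ (N h)) z). Then M ⊔ N is a modulus of convergence for both f₁ and f₂ (Joint Convergence). -/

import Mathlib

/-- `f↓[n,m]`: the function `f` is constant on the interval `[n,m]`. -/
def ConvOn {A : Type*} (f : ℕ → A) (n m : ℕ) : Prop :=
  ∀ x, n ≤ x → x ≤ m → f x = f n

/-- `h ≥ id`. -/
def GeId (h : ℕ → ℕ) : Prop := ∀ x, x ≤ h x

/-- `M` is a modulus of convergence for `f`. -/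
def IsModulus {A : Type*} (M : (ℕ → ℕ) → ℕ → ℕ) (f : ℕ → A) : Prop :=
  (∀ h, GeId h → GeId (M h)) ∧
  (∀ h, GeId h → ∀ z, ConvOn f (M h z) (h (M h z)))

/-- The join of two moduli: `(M ⊔ N) h z = N h (M (h ∘ N h) z)`. -/
def joinMod (M N : (ℕ → ℕ) → ℕ → ℕ) : (ℕ → ℕ) → ℕ → ℕ :=
  fun h z => N h (M (h ∘ N h) z)

/-- Joint Convergence: if `M` is a modulus of convergence for `f₁` and `N` one
for `f₂`, then `M ⊔ N` is a modulus of convergence for both `f₁` and `f₂`. -/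
theorem joint_convergence {A : Type*} (f₁ f₂ : ℕ → A)
    (M N : (ℕ → ℕ) → ℕ → ℕ)
    (hM : IsModulus M f₁) (hN : IsModulus N f₂) :
    IsModulus (joinMod M N) f₁ ∧ IsModulus (joinMod M N) f₂ :=
  by
  obtain ⟨hM1, hM2⟩ := hM
  obtain ⟨hN1, hN2⟩ := hN
  have hcomp : ∀ h, GeId h → GeId (h ∘ N h) := fun h hh x =>
    le_trans (hN1 h hh x) (hh _)
  have hge : ∀ h, GeId h → GeId (joinMod M N h) := fun h hh z =>
    le_trans (hM1 _ (hcomp h hh) z) (hN1 h hh _)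
  refine ⟨⟨hge, ?_⟩, ⟨hge, ?_⟩⟩
  · intro h hh z x hx1 hx2
    set a := M (h ∘ N h) z with ha
    have hc := hM2 (h ∘ N h) (hcomp h hh) z
    have haN : a ≤ N h a := hN1 h hh a
    have e1 := hc x (le_trans haN hx1) hx2
    have e2 := hc (N h a) haN (hh _)
    exact e1.trans e2.symm
  · intro h hh z
    exact hN2 h hh (M (h ∘ N h) z)
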